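/- arXiv:1004.1152 — 2 statements merged into one kernel-verified Lean document; each statement's English description precedes it below -/
import Mathlib

section
/- Let μ be a regular Borel probability measure on [0,1) such that μ([r,1)) > 0 for all 0 < r < 1. Then for any real numbers δ and β, and any function φ on [0,1) with lim_{r→1⁻} φ(r) = α, we have lim_{m→∞} (∫_{[0,1)} φ(r) r^{m+δ} dμ(r)) / (∫_{[0,1)} r^{m+β} dμ(r)) = α. -/
open MeasureTheory Filter

/-- Ratio-limit lemma (one variable): if `μ` is a regular Borel probability measure on `[0,1)`
with `μ([r,1)) > 0` for all `0 < r < 1`, and `φ` is bounded measurable with limit `α` at `1⁻`,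
then `(∫ φ(r) r^{m+δ} dμ) / (∫ r^{m+β} dμ) → α` as `m → ∞`. -/
theorem stmt0 (μ : Measure ℝ) [IsProbabilityMeasure μ] (hreg : μ.Regular)
    (hsupp : μ (Set.Ico (0:ℝ) 1)ᶜ = 0)
    (hpos : ∀ r : ℝ, 0 < r → r < 1 → 0 < μ (Set.Ico r 1))
    (δ β : ℝ) (φ : ℝ → ℝ) (hφm : Measurable φ) (hφb : ∃ C, ∀ r, |φ r| ≤ C)
    (α : ℝ) (hlim : Tendsto φ (nhdsWithin 1 (Set.Ico (0:ℝ) 1)) (nhds α)) :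
    Tendsto (fun m : ℕ =>
        (∫ r in Set.Ico (0:ℝ) 1, φ r * r ^ ((m : ℝ) + δ) ∂μ) /
          (∫ r in Set.Ico (0:ℝ) 1, r ^ ((m : ℝ) + β) ∂μ))
      atTop (nhds α) := by
  obtain ⟨C, hC⟩ := hφb
  have hC0 : 0 ≤ C := le_trans (abs_nonneg _) (hC 0)
  set S : Set ℝ := Set.Ico (0:ℝ) 1 with hSdef
  have hrpow_meas : ∀ e : ℝ, 0 ≤ e → Measurable fun r : ℝ => r ^ e := fun e he =>
    (Real.continuous_rpow_const he).measurable
  -- integrability of r ↦ r ^ e on S for e ≥ 0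
  have hint : ∀ e : ℝ, 0 ≤ e → IntegrableOn (fun r : ℝ => r ^ e) S μ := by
    intro e he
    refine Measure.integrableOn_of_bounded (measure_ne_top μ S)
      ((hrpow_meas e he).aestronglyMeasurable) (M := 1) ?_
    filter_upwards [ae_restrict_mem measurableSet_Ico] with r hr
    rw [Real.norm_eq_abs, abs_of_nonneg (Real.rpow_nonneg hr.1 _)]
    exact Real.rpow_le_one hr.1 hr.2.le he
  have hintφ : ∀ e : ℝ, 0 ≤ e → IntegrableOn (fun r : ℝ => φ r * r ^ e) S μ := by
    intro e he
    refine Measure.integrableOn_of_bounded (measure_ne_top μ S)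
      ((hφm.mul (hrpow_meas e he)).aestronglyMeasurable) (M := C) ?_
    filter_upwards [ae_restrict_mem measurableSet_Ico] with r hr
    rw [Real.norm_eq_abs, abs_mul, abs_of_nonneg (Real.rpow_nonneg hr.1 _)]
    calc |φ r| * r ^ e ≤ C * 1 :=
          mul_le_mul (hC r) (Real.rpow_le_one hr.1 hr.2.le he)
            (Real.rpow_nonneg hr.1 _) hC0
      _ = C := mul_one C
  -- lower bound for the denominator-type integrals
  have hDlb : ∀ s : ℝ, 0 < s → s < 1 → ∀ e : ℝ, 0 ≤ e →
      s ^ e * (μ (Set.Ico s 1)).toReal ≤ ∫ r in S, r ^ e ∂μ := by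
    intro s hs hs1 e he
    have hsub : Set.Ico s 1 ⊆ S := Set.Ico_subset_Ico hs.le le_rfl
    have h2 : ∫ r in Set.Ico s 1, s ^ e ∂μ ≤ ∫ r in Set.Ico s 1, r ^ e ∂μ := by
      refine setIntegral_mono_on (integrableOn_const (measure_ne_top μ _))
        ((hint e he).mono_set hsub) measurableSet_Ico ?_
      intro r hr
      exact Real.rpow_le_rpow hs.le hr.1 he
    have h1 : ∫ r in Set.Ico s 1, r ^ e ∂μ ≤ ∫ r in S, r ^ e ∂μ := by
      refine setIntegral_mono_set (hint e he) ?_ (HasSubset.Subset.eventuallyLE hsub)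
      filter_upwards [ae_restrict_mem measurableSet_Ico] with r hr
      exact Real.rpow_nonneg hr.1 e
    calc s ^ e * (μ (Set.Ico s 1)).toReal
        = ∫ _ in Set.Ico s 1, s ^ e ∂μ := by rw [setIntegral_const, smul_eq_mul, mul_comm]; rfl
      _ ≤ ∫ r in Set.Ico s 1, r ^ e ∂μ := h2
      _ ≤ ∫ r in S, r ^ e ∂μ := h1
  -- main ε-argument
  rw [Metric.tendsto_atTop]
  intro ε hε
  set A : ℝ := 3 + |α| with hA
  have hApos : 0 < A := by positivity
  set ε₁ : ℝ := min (ε / (2 * A)) 1 with hε₁def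
  have hε₁pos : 0 < ε₁ := lt_min (by positivity) one_pos
  have hε₁le1 : ε₁ ≤ 1 := min_le_right _ _
  have hε₁le : ε₁ ≤ ε / (2 * A) := min_le_left _ _
  -- choose r₀
  obtain ⟨d, hd, hdφ⟩ := Metric.tendsto_nhdsWithin_nhds.mp hlim ε₁ hε₁pos
  have hcont : ContinuousAt (fun r : ℝ => r ^ (δ - β)) 1 :=
    Real.continuousAt_rpow_const 1 _ (Or.inl one_ne_zero)
  have hcont1 : (fun r : ℝ => r ^ (δ - β)) 1 = 1 := Real.one_rpow _
  obtain ⟨d', hd', hdψ⟩ := Metric.continuousAt_iff.mp hcont ε₁ hε₁pos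
  set r₀ : ℝ := max (1 - min d d' / 2) (1/2) with hr₀def
  have hdd' : 0 < min d d' := lt_min hd hd'
  have hr₀pos : 0 < r₀ := lt_of_lt_of_le (by norm_num) (le_max_right _ _)
  have hr₀lt1 : r₀ < 1 := max_lt (by linarith) (by norm_num)
  have hr₀close : ∀ r : ℝ, r₀ ≤ r → r < 1 → dist r 1 < min d d' := by
    intro r hr hr1
    rw [Real.dist_eq, abs_of_nonpos (by linarith)]
    have : 1 - min d d' / 2 ≤ r₀ := le_max_left _ _
    linarith
  have hφ_close : ∀ r : ℝ, r₀ ≤ r → r < 1 → |φ r - α| ≤ ε₁ := by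
    intro r hr hr1
    have hrS : r ∈ S := ⟨by linarith, hr1⟩
    have := hdφ hrS (lt_of_lt_of_le (hr₀close r hr hr1) (min_le_left _ _))
    rw [Real.dist_eq] at this
    exact this.le
  have hψ_close : ∀ r : ℝ, r₀ ≤ r → r < 1 → |r ^ (δ - β) - 1| ≤ ε₁ := by
    intro r hr hr1
    have := hdψ (lt_of_lt_of_le (hr₀close r hr hr1) (min_le_right _ _))
    rw [Real.dist_eq, Real.one_rpow] at this
    exact this.le
  -- auxiliary point s between r₀ and 1
  set s : ℝ := (1 + r₀) / 2 with hsdef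
  have hr₀s : r₀ < s := by rw [hsdef]; linarith
  have hspos : 0 < s := lt_trans hr₀pos hr₀s
  have hs1 : s < 1 := by rw [hsdef]; linarith
  set c : ℝ := (μ (Set.Ico s 1)).toReal with hcdef
  have hcpos : 0 < c :=
    ENNReal.toReal_pos (hpos s hspos hs1).ne' (measure_ne_top μ _)
  set q : ℝ := r₀ / s with hqdef
  have hq0 : 0 ≤ q := div_nonneg hr₀pos.le hspos.le
  have hq1 : q < 1 := (div_lt_one hspos).2 hr₀s
  set K : ℝ := (C * r₀ ^ δ + |α| * r₀ ^ β) / (s ^ β * c) with hKdef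
  have hgeo : Tendsto (fun m : ℕ => K * q ^ m) atTop (nhds 0) := by
    simpa using (tendsto_pow_atTop_nhds_zero_of_lt_one hq0 hq1).const_mul K
  obtain ⟨M₁, hM₁⟩ := eventually_atTop.mp (hgeo.eventually (gt_mem_nhds hε₁pos))
  set M₀ : ℕ := ⌈|δ| + |β|⌉₊ with hM₀def
  refine ⟨max M₀ M₁, fun m hm => ?_⟩
  have hmM₀ : M₀ ≤ m := le_trans (le_max_left _ _) hm
  have hmM₁ : M₁ ≤ m := le_trans (le_max_right _ _) hm
  have hmabs : |δ| + |β| ≤ (m : ℝ) := by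
    calc |δ| + |β| ≤ (M₀ : ℝ) := Nat.le_ceil _
      _ ≤ (m : ℝ) := Nat.cast_le.2 hmM₀
  have hmδ : 0 ≤ (m : ℝ) + δ := by
    have := abs_nonneg β; have := neg_abs_le δ; linarith
  have hmβ : 0 ≤ (m : ℝ) + β := by
    have := abs_nonneg δ; have := neg_abs_le β; linarith
  set Nm : ℝ := ∫ r in S, φ r * r ^ ((m : ℝ) + δ) ∂μ with hNm
  set Dm : ℝ := ∫ r in S, r ^ ((m : ℝ) + β) ∂μ with hDm
  have hDlb' : s ^ ((m : ℝ) + β) * c ≤ Dm := hDlb s hspos hs1 _ hmβ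
  have hDenom_pos : 0 < s ^ ((m : ℝ) + β) * c :=
    mul_pos (Real.rpow_pos_of_pos hspos _) hcpos
  have hDpos : 0 < Dm := lt_of_lt_of_le hDenom_pos hDlb'
  -- the combined integrand
  set f : ℝ → ℝ := fun r => φ r * r ^ ((m : ℝ) + δ) - α * r ^ ((m : ℝ) + β) with hf
  have hintf : IntegrableOn f S μ := (hintφ _ hmδ).sub ((hint _ hmβ).const_mul α)
  have hNαD : ∫ r in S, f r ∂μ = Nm - α * Dm := by
    rw [hf]
    rw [integral_sub (hintφ _ hmδ) ((hint _ hmβ).const_mul α), integral_const_mul]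
  -- split S at r₀
  have hsplitS : Set.Ico (0:ℝ) r₀ ∪ Set.Ico r₀ 1 = S :=
    Set.Ico_union_Ico_eq_Ico hr₀pos.le hr₀lt1.le
  have hsub1 : Set.Ico (0:ℝ) r₀ ⊆ S := by rw [← hsplitS]; exact Set.subset_union_left
  have hsub2 : Set.Ico r₀ 1 ⊆ S := by rw [← hsplitS]; exact Set.subset_union_right
  have hsplit : ∫ r in S, f r ∂μ =
      (∫ r in Set.Ico (0:ℝ) r₀, f r ∂μ) + ∫ r in Set.Ico r₀ 1, f r ∂μ := by
    rw [← hsplitS, setIntegral_union (Set.Ico_disjoint_Ico_same)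
      measurableSet_Ico (hintf.mono_set hsub1) (hintf.mono_set hsub2)]
  -- bound on [0, r₀)
  set B : ℝ := C * r₀ ^ ((m : ℝ) + δ) + |α| * r₀ ^ ((m : ℝ) + β) with hB
  have hBnonneg : 0 ≤ B := by
    have := Real.rpow_nonneg hr₀pos.le ((m : ℝ) + δ)
    have := Real.rpow_nonneg hr₀pos.le ((m : ℝ) + β)
    positivity
  have hbound1 : |∫ r in Set.Ico (0:ℝ) r₀, f r ∂μ| ≤ B := by
    have key : ∀ r ∈ Set.Ico (0:ℝ) r₀, ‖f r‖ ≤ B := by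
      intro r hr
      rw [Real.norm_eq_abs, hf]
      have h1 : |φ r * r ^ ((m : ℝ) + δ)| ≤ C * r₀ ^ ((m : ℝ) + δ) := by
        rw [abs_mul, abs_of_nonneg (Real.rpow_nonneg hr.1 _)]
        exact mul_le_mul (hC r) (Real.rpow_le_rpow hr.1 hr.2.le hmδ)
          (Real.rpow_nonneg hr.1 _) hC0
      have h2 : |α * r ^ ((m : ℝ) + β)| ≤ |α| * r₀ ^ ((m : ℝ) + β) := by
        rw [abs_mul, abs_of_nonneg (Real.rpow_nonneg hr.1 _)]
        exact mul_le_mul_of_nonneg_left (Real.rpow_le_rpow hr.1 hr.2.le hmβ) (abs_nonneg α)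
      calc |φ r * r ^ ((m : ℝ) + δ) - α * r ^ ((m : ℝ) + β)|
          ≤ |φ r * r ^ ((m : ℝ) + δ)| + |α * r ^ ((m : ℝ) + β)| := abs_sub _ _
        _ ≤ B := by rw [hB]; linarith
    have := norm_setIntegral_le_of_norm_le_const (μ := μ) (s := Set.Ico (0:ℝ) r₀)
      (measure_lt_top μ _) key
    rw [Real.norm_eq_abs] at this
    refine le_trans this ?_
    have hμle : (μ (Set.Ico (0:ℝ) r₀)).toReal ≤ 1 := by
      have h := measure_mono (Set.subset_univ (Set.Ico (0:ℝ) r₀)) (μ := μ)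
      rw [measure_univ] at h
      simpa using ENNReal.toReal_mono (by norm_num) h
    calc B * (μ (Set.Ico (0:ℝ) r₀)).toReal ≤ B * 1 :=
          mul_le_mul_of_nonneg_left hμle hBnonneg
      _ = B := mul_one B
  -- bound on [r₀, 1)
  have hbound2 : |∫ r in Set.Ico r₀ 1, f r ∂μ| ≤ ε₁ * (2 + |α|) * Dm := by
    have hptwise : ∀ r ∈ Set.Ico r₀ 1, |f r| ≤ ε₁ * (2 + |α|) * r ^ ((m : ℝ) + β) := by
      intro r hr
      have hrpos : 0 < r := lt_of_lt_of_le hr₀pos hr.1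
      have hψ : |r ^ (δ - β) - 1| ≤ ε₁ := hψ_close r hr.1 hr.2
      have hφc : |φ r - α| ≤ ε₁ := hφ_close r hr.1 hr.2
      have hsplit_exp : r ^ ((m : ℝ) + δ) = r ^ ((m : ℝ) + β) * r ^ (δ - β) := by
        rw [← Real.rpow_add hrpos]; ring_nf
      have hrβpos : 0 < r ^ ((m : ℝ) + β) := Real.rpow_pos_of_pos hrpos _
      have hψub : r ^ (δ - β) ≤ 1 + ε₁ := by
        have := abs_le.1 hψ; linarith [this.2]
      have hψlb : 0 ≤ r ^ (δ - β) := Real.rpow_nonneg hrpos.le _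
      have decomp : f r = (φ r - α) * r ^ ((m : ℝ) + δ)
          + α * (r ^ ((m : ℝ) + β) * (r ^ (δ - β) - 1)) := by
        simp only [hf]; linear_combination α * hsplit_exp
      have t1 : |(φ r - α) * r ^ ((m : ℝ) + δ)| ≤ ε₁ * (2 * r ^ ((m : ℝ) + β)) := by
        rw [abs_mul, hsplit_exp, abs_of_nonneg (mul_nonneg hrβpos.le hψlb)]
        have h2 : r ^ ((m : ℝ) + β) * r ^ (δ - β) ≤ r ^ ((m : ℝ) + β) * 2 := by
          refine mul_le_mul_of_nonneg_left ?_ hrβpos.le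
          linarith
        calc |φ r - α| * (r ^ ((m : ℝ) + β) * r ^ (δ - β))
            ≤ ε₁ * (r ^ ((m : ℝ) + β) * 2) :=
              mul_le_mul hφc h2 (mul_nonneg hrβpos.le hψlb) hε₁pos.le
          _ = ε₁ * (2 * r ^ ((m : ℝ) + β)) := by ring
      have t2 : |α * (r ^ ((m : ℝ) + β) * (r ^ (δ - β) - 1))|
          ≤ |α| * (r ^ ((m : ℝ) + β) * ε₁) := by
        rw [abs_mul, abs_mul, abs_of_nonneg hrβpos.le]
        exact mul_le_mul_of_nonneg_left
          (mul_le_mul_of_nonneg_left hψ hrβpos.le) (abs_nonneg α)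
      calc |f r| ≤ |(φ r - α) * r ^ ((m : ℝ) + δ)|
            + |α * (r ^ ((m : ℝ) + β) * (r ^ (δ - β) - 1))| := by
              rw [decomp]; exact abs_add_le _ _
        _ ≤ ε₁ * (2 * r ^ ((m : ℝ) + β)) + |α| * (r ^ ((m : ℝ) + β) * ε₁) := by
              linarith
        _ = ε₁ * (2 + |α|) * r ^ ((m : ℝ) + β) := by ring
    have step1 : |∫ r in Set.Ico r₀ 1, f r ∂μ| ≤ ∫ r in Set.Ico r₀ 1, |f r| ∂μ := by
      simpa [Real.norm_eq_abs] using
        norm_integral_le_integral_norm (μ := μ.restrict (Set.Ico r₀ 1)) f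
    have step2 : ∫ r in Set.Ico r₀ 1, |f r| ∂μ
        ≤ ∫ r in Set.Ico r₀ 1, ε₁ * (2 + |α|) * r ^ ((m : ℝ) + β) ∂μ := by
      refine setIntegral_mono_on (hintf.mono_set hsub2).abs
        (((hint _ hmβ).mono_set hsub2).const_mul _) measurableSet_Ico hptwise
    have step3 : ∫ r in Set.Ico r₀ 1, ε₁ * (2 + |α|) * r ^ ((m : ℝ) + β) ∂μ
        ≤ ε₁ * (2 + |α|) * Dm := by
      rw [integral_const_mul]
      refine mul_le_mul_of_nonneg_left ?_ (by positivity)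
      refine setIntegral_mono_set (hint _ hmβ) ?_ (HasSubset.Subset.eventuallyLE hsub2)
      filter_upwards [ae_restrict_mem measurableSet_Ico] with r hr
      exact Real.rpow_nonneg hr.1 _
    linarith
  -- combine
  have hmain : |Nm - α * Dm| ≤ B + ε₁ * (2 + |α|) * Dm := by
    rw [← hNαD, hsplit]
    calc |(∫ r in Set.Ico (0:ℝ) r₀, f r ∂μ) + ∫ r in Set.Ico r₀ 1, f r ∂μ|
        ≤ |∫ r in Set.Ico (0:ℝ) r₀, f r ∂μ| + |∫ r in Set.Ico r₀ 1, f r ∂μ| := abs_add_le _ _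
      _ ≤ B + ε₁ * (2 + |α|) * Dm := add_le_add hbound1 hbound2
  -- B / Dm ≤ K * q ^ m < ε₁
  have hBK : B / Dm ≤ K * q ^ m := by
    have h1 : B / Dm ≤ B / (s ^ ((m : ℝ) + β) * c) :=
      div_le_div_of_nonneg_left hBnonneg hDenom_pos hDlb'
    have heq : B / (s ^ ((m : ℝ) + β) * c) = K * q ^ m := by
      rw [hB, hKdef, hqdef]
      clear_value B K q c s
      rw [Real.rpow_add hr₀pos, Real.rpow_add hr₀pos, Real.rpow_add hspos,
        Real.rpow_natCast, Real.rpow_natCast, div_pow]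
      ring
    rw [heq] at h1
    exact h1
  have hKq : K * q ^ m < ε₁ := hM₁ m hmM₁
  -- final estimate
  have hfinal : |Nm / Dm - α| < ε := by
    have hDne : Dm ≠ 0 := hDpos.ne'
    have heq2 : Nm / Dm - α = (Nm - α * Dm) / Dm := by field_simp
    rw [heq2, abs_div, abs_of_pos hDpos]
    have h3 : |Nm - α * Dm| / Dm ≤ (B + ε₁ * (2 + |α|) * Dm) / Dm :=
      (div_le_div_iff_of_pos_right hDpos).2 hmain
    have h4 : (B + ε₁ * (2 + |α|) * Dm) / Dm = B / Dm + ε₁ * (2 + |α|) := by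
      field_simp
    have h5 : B / Dm + ε₁ * (2 + |α|) < ε₁ + ε₁ * (2 + |α|) := by
      have := lt_of_le_of_lt hBK hKq
      linarith
    have h6 : ε₁ + ε₁ * (2 + |α|) = ε₁ * A := by rw [hA]; ring
    have h7 : ε₁ * A ≤ ε / (2 * A) * A :=
      mul_le_mul_of_nonneg_right hε₁le hApos.le
    have h8 : ε / (2 * A) * A = ε / 2 := by field_simp
    calc |Nm - α * Dm| / Dm ≤ (B + ε₁ * (2 + |α|) * Dm) / Dm := h3
      _ = B / Dm + ε₁ * (2 + |α|) := h4
      _ < ε₁ + ε₁ * (2 + |α|) := h5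
      _ = ε₁ * A := h6
      _ ≤ ε / 2 := h7.trans_eq h8
      _ < ε := by linarith
  rw [Real.dist_eq]
  exact hfinal
end

section
/- Let μ₁,…,μ_N be positive regular Borel measures on [0,1), each satisfying μ_j([r,1)) > 0 for all 0 < r < 1. Suppose φ : [0,1)^N → ℝ is bounded measurable with lim_{(r₁,…,r_N)→(1,…,1)} φ(r) = α. Then for any N-tuples of reals δ = (δ₁,…,δ_N) and β = (β₁,…,β_N), the ratio (∫ φ(r) r₁^{m₁+δ₁}⋯r_N^{m_N+δ_N} dμ₁⋯dμ_N) / (∫ r₁^{m₁+β₁}⋯r_N^{m_N+β_N} dμ₁⋯dμ_N) tends to α as all m_j → ∞. -/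
open MeasureTheory Filter

-- product integral for Measure.pi
theorem my_integral_pi_prod (N : ℕ) (μs : Fin N → Measure ℝ) [hs : ∀ j, SigmaFinite (μs j)]
    (f : Fin N → ℝ → ℝ) :
    ∫ x : Fin N → ℝ, ∏ i, f i (x i) ∂Measure.pi μs = ∏ i, ∫ x, f i x ∂(μs i) :=
  MeasureTheory.integral_fintype_prod_eq_prod f

section OneDim
variable {μ : Measure ℝ} [IsFiniteMeasure μ]

theorem my_ae_mem (h0 : μ (Set.Ico (0:ℝ) 1)ᶜ = 0) : ∀ᵐ r ∂μ, r ∈ Set.Ico (0:ℝ) 1 := by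
  have : {r : ℝ | ¬ r ∈ Set.Ico (0:ℝ) 1} = (Set.Ico (0:ℝ) 1)ᶜ := rfl
  rw [MeasureTheory.ae_iff, this, h0]

theorem my_int_pow (h0 : μ (Set.Ico (0:ℝ) 1)ᶜ = 0) (n : ℕ) :
    Integrable (fun r : ℝ => r ^ n) μ := by
  refine Integrable.mono' (integrable_const (1:ℝ)) (by fun_prop) ?_
  filter_upwards [my_ae_mem h0] with r hr
  rw [Real.norm_eq_abs, abs_of_nonneg (pow_nonneg hr.1 _)]
  exact pow_le_one₀ hr.1 hr.2.le

theorem my_J_pos (h0 : μ (Set.Ico (0:ℝ) 1)ᶜ = 0)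
    (hpos : ∀ r : ℝ, 0 < r → r < 1 → 0 < μ (Set.Ico r 1)) (n : ℕ) :
    0 < ∫ r, r ^ n ∂μ := by
  have h1 : ((1:ℝ)/2) ^ n * (μ (Set.Ico (1/2 : ℝ) 1)).toReal ≤ ∫ r in Set.Ico (1/2:ℝ) 1, r ^ n ∂μ := by
    refine setIntegral_ge_of_const_le_real measurableSet_Ico (measure_ne_top μ _) ?_
      ((my_int_pow h0 n).integrableOn)
    intro x hx
    exact pow_le_pow_left₀ (by norm_num) hx.1 n
  have h2 : ∫ r in Set.Ico (1/2:ℝ) 1, r ^ n ∂μ ≤ ∫ r, r ^ n ∂μ := by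
    refine setIntegral_le_integral (my_int_pow h0 n) ?_
    filter_upwards [my_ae_mem h0] with r hr
    exact pow_nonneg hr.1 _
  have h3 : 0 < (μ (Set.Ico (1/2 : ℝ) 1)).toReal :=
    ENNReal.toReal_pos (hpos _ (by norm_num) (by norm_num)).ne' (measure_ne_top μ _)
  have h4 : (0:ℝ) < ((1:ℝ)/2) ^ n := by positivity
  nlinarith

theorem my_tail (h0 : μ (Set.Ico (0:ℝ) 1)ᶜ = 0)
    (hpos : ∀ r : ℝ, 0 < r → r < 1 → 0 < μ (Set.Ico r 1))
    {s : ℝ} (hs0 : 0 < s) (hs1 : s < 1) :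
    Tendsto (fun n => (∫ r in Set.Iic s, r ^ n ∂μ) / ∫ r, r ^ n ∂μ) atTop (nhds 0) := by
  set t : ℝ := (1 + s) / 2 with ht
  have hst : s < t := by rw [ht]; linarith
  have ht1 : t < 1 := by rw [ht]; linarith
  have ht0 : 0 < t := by rw [ht]; linarith
  set c : ℝ := (μ (Set.Ico t 1)).toReal with hc
  have hc0 : 0 < c := ENNReal.toReal_pos (hpos _ ht0 ht1).ne' (measure_ne_top μ _)
  set M : ℝ := (μ Set.univ).toReal with hM
  have hM0 : 0 ≤ M := ENNReal.toReal_nonneg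
  have hnum : ∀ n : ℕ, ∫ r in Set.Iic s, r ^ n ∂μ ≤ s ^ n * M := by
    intro n
    have h1 : ∫ r in Set.Iic s, r ^ n ∂μ ≤ ∫ _ in Set.Iic s, s ^ n ∂μ := by
      refine integral_mono_ae ((my_int_pow h0 n).integrableOn) (integrable_const _) ?_
      filter_upwards [ae_restrict_of_ae (my_ae_mem h0), ae_restrict_mem measurableSet_Iic]
        with r hr hrs
      exact pow_le_pow_left₀ hr.1 hrs n
    have h2 : ∫ _ in Set.Iic s, s ^ n ∂μ = (μ (Set.Iic s)).toReal * s ^ n := by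
      rw [setIntegral_const, smul_eq_mul, measureReal_def]
    have h3 : (μ (Set.Iic s)).toReal ≤ M :=
      ENNReal.toReal_mono (measure_ne_top μ _) (measure_mono (Set.subset_univ _))
    have h4 : (0:ℝ) ≤ s ^ n := by positivity
    nlinarith
  have hden : ∀ n : ℕ, t ^ n * c ≤ ∫ r, r ^ n ∂μ := by
    intro n
    have h1 : t ^ n * c ≤ ∫ r in Set.Ico t 1, r ^ n ∂μ := by
      refine setIntegral_ge_of_const_le_real measurableSet_Ico (measure_ne_top μ _) ?_
        ((my_int_pow h0 n).integrableOn)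
      intro x hx
      exact pow_le_pow_left₀ ht0.le hx.1 n
    refine h1.trans (setIntegral_le_integral (my_int_pow h0 n) ?_)
    filter_upwards [my_ae_mem h0] with r hr
    exact pow_nonneg hr.1 _
  have hub : ∀ n : ℕ, (∫ r in Set.Iic s, r ^ n ∂μ) / ∫ r, r ^ n ∂μ ≤ (s/t) ^ n * (M / c) := by
    intro n
    have hJ : 0 < ∫ r, r ^ n ∂μ := my_J_pos h0 hpos n
    have := div_le_div₀ (by positivity) (hnum n) (by positivity : (0:ℝ) < t ^ n * c) (hden n)
    calc (∫ r in Set.Iic s, r ^ n ∂μ) / ∫ r, r ^ n ∂μ ≤ (s ^ n * M) / (t ^ n * c) := this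
      _ = (s/t) ^ n * (M / c) := by
        field_simp
        clear_value t
        rw [div_pow]; field_simp
  have hlb : ∀ n : ℕ, 0 ≤ (∫ r in Set.Iic s, r ^ n ∂μ) / ∫ r, r ^ n ∂μ := by
    intro n
    have hJ : 0 < ∫ r, r ^ n ∂μ := my_J_pos h0 hpos n
    refine div_nonneg ?_ hJ.le
    refine integral_nonneg_of_ae ?_
    filter_upwards [ae_restrict_of_ae (my_ae_mem h0)] with r hr
    exact pow_nonneg hr.1 _
  have hgeo : Tendsto (fun n : ℕ => (s/t) ^ n * (M / c)) atTop (nhds 0) := by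
    have := (tendsto_pow_atTop_nhds_zero_of_lt_one (by positivity : (0:ℝ) ≤ s/t)
      ((div_lt_one ht0).mpr hst)).mul_const (M / c)
    simpa using this
  exact tendsto_of_tendsto_of_tendsto_of_le_of_le tendsto_const_nhds hgeo hlb hub

end OneDim

section MultiDim
variable {N : ℕ} {μs : Fin N → Measure ℝ} [∀ j, IsFiniteMeasure (μs j)]

theorem my_cube_ae (hsupp : ∀ j, μs j (Set.Ico (0:ℝ) 1)ᶜ = 0) :
    ∀ᵐ r ∂(Measure.pi μs), ∀ j, r j ∈ Set.Ico (0:ℝ) 1 := by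
  rw [MeasureTheory.ae_iff]
  have hsub : {r : Fin N → ℝ | ¬ ∀ j, r j ∈ Set.Ico (0:ℝ) 1} ⊆
      ⋃ j, (fun r : Fin N → ℝ => r j) ⁻¹' (Set.Ico (0:ℝ) 1)ᶜ := by
    intro r hr
    push_neg at hr
    obtain ⟨j, hj⟩ := hr
    exact Set.mem_iUnion.mpr ⟨j, hj⟩
  refine measure_mono_null hsub (measure_iUnion_null fun j => ?_)
  have heq : (fun r : Fin N → ℝ => r j) ⁻¹' (Set.Ico (0:ℝ) 1)ᶜ =
      Set.univ.pi (Function.update (fun _ : Fin N => (Set.univ : Set ℝ)) j (Set.Ico (0:ℝ) 1)ᶜ) := by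
    ext r
    simp only [Set.mem_preimage, Set.mem_univ_pi]
    constructor
    · intro h i
      by_cases hij : i = j
      · subst hij; simpa [Function.update] using h
      · simp [Function.update, hij]
    · intro h
      have := h j
      simpa [Function.update] using this
  rw [heq, Measure.pi_pi]
  refine Finset.prod_eq_zero (Finset.mem_univ j) ?_
  simp [Function.update, hsupp j]

theorem my_core (hsupp : ∀ j, μs j (Set.Ico (0:ℝ) 1)ᶜ = 0)
    (hpos : ∀ j, ∀ r : ℝ, 0 < r → r < 1 → 0 < μs j (Set.Ico r 1))
    (ψ : (Fin N → ℝ) → ℝ) (hm : Measurable ψ) (C : ℝ)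
    (hb : ∀ᵐ r ∂(Measure.pi μs), |ψ r| ≤ C) (L : ℝ)
    (hlim : Tendsto ψ (nhdsWithin (fun _ => 1) (Set.univ.pi fun _ => Set.Ico (0:ℝ) 1))
      (nhds L)) :
    Tendsto (fun n : Fin N → ℕ =>
      (∫ r, ψ r * ∏ j, r j ^ (n j) ∂Measure.pi μs) / ∏ j, ∫ x, x ^ (n j) ∂μs j)
      atTop (nhds L) := by
  classical
  set P := Measure.pi μs with hPdef
  have hae : ∀ᵐ r ∂P, ∀ j, r j ∈ Set.Ico (0:ℝ) 1 := my_cube_ae hsupp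
  set J : Fin N → ℕ → ℝ := fun j n => ∫ x, x ^ n ∂μs j with hJdef
  have hJpos : ∀ j n, 0 < J j n := fun j n => my_J_pos (hsupp j) (hpos j) n
  have hZpos : ∀ n : Fin N → ℕ, 0 < ∏ j, J j (n j) :=
    fun n => Finset.prod_pos fun j _ => hJpos j (n j)
  set D : ℝ := |C| + |L| with hDdef
  have hD0 : 0 ≤ D := by positivity
  rw [Metric.tendsto_nhds]
  intro ε hε
  obtain ⟨d, hd, hds⟩ := Metric.tendsto_nhdsWithin_nhds.mp hlim (ε/2) (by positivity)
  set s : ℝ := max (1 - d) (1/2) with hsdef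
  have hs0 : (0:ℝ) < s := lt_of_lt_of_le (by norm_num) (le_max_right _ _)
  have hs1 : s < 1 := max_lt (by linarith) (by norm_num)
  have hKey : ∀ r : Fin N → ℝ, (∀ j, r j ∈ Set.Ico (0:ℝ) 1) → (∀ j, s < r j) →
      |ψ r - L| < ε/2 := by
    intro r hr hsr
    have hdist : dist r (fun _ => 1) < d := by
      rw [dist_pi_lt_iff hd]
      intro j
      rw [Real.dist_eq, abs_of_nonpos (by linarith [(hr j).2])]
      have h1 := hsr j
      have h2 := le_max_left (1 - d) (1/2 : ℝ)
      linarith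
    have hmem : r ∈ Set.univ.pi fun _ : Fin N => Set.Ico (0:ℝ) 1 :=
      Set.mem_univ_pi.mpr hr
    have := hds hmem hdist
    rwa [Real.dist_eq] at this
  set T : Fin N → ℕ → ℝ := fun k n => ∫ x in Set.Iic s, x ^ n ∂μs k with hTdef
  have htail : ∀ k, Tendsto (fun n : ℕ => T k n / J k n) atTop (nhds 0) :=
    fun k => my_tail (hsupp k) (hpos k) hs0 hs1
  have heval : ∀ k : Fin N, Tendsto (fun n : Fin N → ℕ => n k) atTop atTop := by
    intro k
    refine tendsto_atTop_atTop.mpr fun b => ⟨fun _ => b, fun m hm' => hm' k⟩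
  have hR : Tendsto (fun n : Fin N → ℕ => D * ∑ k, T k (n k) / J k (n k)) atTop (nhds 0) := by
    have h1 : Tendsto (fun n : Fin N → ℕ => ∑ k, T k (n k) / J k (n k)) atTop
        (nhds (∑ _k : Fin N, (0:ℝ))) := by
      refine tendsto_finset_sum _ fun k _ => ?_
      exact ((htail k).comp (heval k))
    simpa using h1.const_mul D
  filter_upwards [hR.eventually_lt_const (show (0:ℝ) < ε/2 by positivity)] with n hn
  -- notation for this fixed n
  set W : (Fin N → ℝ) → ℝ := fun r => ∏ j, r j ^ (n j) with hWdef
  have hWm : Measurable W := Finset.measurable_prod _ fun j _ =>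
    (measurable_pi_apply j).pow_const _
  have hW01 : ∀ᵐ r ∂P, 0 ≤ W r ∧ W r ≤ 1 := by
    filter_upwards [hae] with r hr
    exact ⟨Finset.prod_nonneg fun j _ => pow_nonneg (hr j).1 _,
      Finset.prod_le_one (fun j _ => pow_nonneg (hr j).1 _)
        (fun j _ => pow_le_one₀ (hr j).1 (hr j).2.le)⟩
  have hWint : Integrable W P := by
    refine Integrable.mono' (integrable_const (1:ℝ)) hWm.aestronglyMeasurable ?_
    filter_upwards [hW01] with r hr
    rw [Real.norm_eq_abs, abs_of_nonneg hr.1]; exact hr.2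
  have hψW : Integrable (fun r => ψ r * W r) P := by
    refine Integrable.mono' (integrable_const (|C|)) ((hm.mul hWm).aestronglyMeasurable) ?_
    filter_upwards [hW01, hb] with r hr hbr
    rw [Real.norm_eq_abs, abs_mul, abs_of_nonneg hr.1]
    calc |ψ r| * W r ≤ |C| * 1 :=
      mul_le_mul (hbr.trans (le_abs_self C)) hr.2 hr.1 (abs_nonneg C)
      _ = |C| := mul_one _
  have habsint : Integrable (fun r => |ψ r - L| * W r) P := by
    refine Integrable.mono' (integrable_const D) (((hm.sub measurable_const).abs.mul
      hWm).aestronglyMeasurable) ?_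
    filter_upwards [hW01, hb] with r hr hbr
    rw [Real.norm_eq_abs, abs_mul, abs_abs, abs_of_nonneg hr.1]
    have h1 : |ψ r - L| ≤ D := by
      calc |ψ r - L| ≤ |ψ r| + |L| := abs_sub _ _
        _ ≤ |C| + |L| := by linarith [hbr.trans (le_abs_self C)]
    calc |ψ r - L| * W r ≤ D * 1 := mul_le_mul h1 hr.2 hr.1 hD0
      _ = D := mul_one _
  set B : Fin N → Set (Fin N → ℝ) := fun k => {r | r k ≤ s} with hBdef
  have hBmeas : ∀ k, MeasurableSet (B k) := fun k =>
    measurableSet_le (measurable_pi_apply k) measurable_const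
  have hZ : ∫ r, W r ∂P = ∏ j, J j (n j) := my_integral_pi_prod N μs fun j x => x ^ (n j)
  have hfact : ∀ k, ∫ r, (B k).indicator W r ∂P =
      T k (n k) * ∏ j ∈ Finset.univ.erase k, J j (n j) := by
    intro k
    set g : Fin N → ℝ → ℝ := fun j x =>
      if j = k then (Set.Iic s).indicator (fun y => y ^ (n j)) x else x ^ (n j) with hgdef
    have h1 : ∀ r : Fin N → ℝ, (B k).indicator W r = ∏ j, g j (r j) := by
      intro r
      by_cases hrk : r k ≤ s
      · have hmem : r ∈ B k := hrk
        have hmem2 : r k ∈ Set.Iic s := hrk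
        rw [Set.indicator_of_mem hmem W]
        refine Finset.prod_congr rfl fun j _ => ?_
        by_cases hjk : j = k
        · subst hjk
          simp only [hgdef, if_pos rfl, Set.indicator_of_mem hmem2]
        · simp [hgdef, hjk]
      · have hmem : r ∉ B k := hrk
        have hmem2 : r k ∉ Set.Iic s := hrk
        rw [Set.indicator_of_notMem hmem W]
        symm
        refine Finset.prod_eq_zero (Finset.mem_univ k) ?_
        simp [hgdef, Set.indicator_of_notMem hmem2]
      
    calc ∫ r, (B k).indicator W r ∂P = ∫ r, ∏ j, g j (r j) ∂P :=
          integral_congr_ae (Filter.Eventually.of_forall h1)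
      _ = ∏ j, ∫ x, g j x ∂μs j := my_integral_pi_prod N μs g
      _ = (∫ x, g k x ∂μs k) * ∏ j ∈ Finset.univ.erase k, ∫ x, g j x ∂μs j :=
          (Finset.mul_prod_erase Finset.univ _ (Finset.mem_univ k)).symm
      _ = T k (n k) * ∏ j ∈ Finset.univ.erase k, J j (n j) := by
          congr 1
          · simp only [hgdef, if_pos rfl]
            rw [integral_indicator measurableSet_Iic]
          · refine Finset.prod_congr rfl fun j hj => ?_
            rw [hgdef]; simp only [if_neg (Finset.ne_of_mem_erase hj)]
            rfl
  have hptwise : ∀ᵐ r ∂P, |ψ r - L| * W r ≤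
      (ε/2) * W r + D * ∑ k, (B k).indicator W r := by
    filter_upwards [hae, hb] with r hr hbr
    have hW0 : 0 ≤ W r := Finset.prod_nonneg fun j _ => pow_nonneg (hr j).1 _
    have hindnn : ∀ k, 0 ≤ (B k).indicator W r :=
      fun k => Set.indicator_apply_nonneg fun _ => hW0
    by_cases hcase : ∀ j, s < r j
    · have h1 := (hKey r hr hcase).le
      have h2 : 0 ≤ D * ∑ k, (B k).indicator W r :=
        mul_nonneg hD0 (Finset.sum_nonneg fun k _ => hindnn k)
      calc |ψ r - L| * W r ≤ ε/2 * W r := mul_le_mul_of_nonneg_right h1 hW0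
        _ ≤ (ε/2) * W r + D * ∑ k, (B k).indicator W r := le_add_of_nonneg_right h2
    · push_neg at hcase
      obtain ⟨k, hk⟩ := hcase
      have h1 : |ψ r - L| ≤ D := by
        calc |ψ r - L| ≤ |ψ r| + |L| := abs_sub _ _
          _ ≤ |C| + |L| := by linarith [hbr.trans (le_abs_self C)]
      have h2 : (B k).indicator W r = W r := Set.indicator_of_mem (show r ∈ B k from hk) W
      have h3 : (B k).indicator W r ≤ ∑ k', (B k').indicator W r :=
        Finset.single_le_sum (fun k' _ => hindnn k') (Finset.mem_univ k)
      have h4 : 0 ≤ (ε/2) * W r := by positivity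
      calc |ψ r - L| * W r ≤ D * W r := mul_le_mul_of_nonneg_right h1 hW0
        _ = D * (B k).indicator W r := by rw [h2]
        _ ≤ D * ∑ k', (B k').indicator W r := mul_le_mul_of_nonneg_left h3 hD0
        _ ≤ (ε/2) * W r + D * ∑ k', (B k').indicator W r := by linarith
  have hintInd : ∀ k : Fin N, Integrable ((B k).indicator W) P :=
    fun k => hWint.indicator (hBmeas k)
  have hintRHS : Integrable (fun r => (ε/2) * W r + D * ∑ k, (B k).indicator W r) P := by
    refine (hWint.const_mul _).add ?_
    exact (integrable_finset_sum _ fun k _ => hintInd k).const_mul _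
  have hmain : |(∫ r, ψ r * W r ∂P) - L * ∏ j, J j (n j)| ≤
      (ε/2) * (∏ j, J j (n j)) + D * ∑ k, T k (n k) * ∏ j ∈ Finset.univ.erase k, J j (n j) := by
    have e1 : (∫ r, ψ r * W r ∂P) - L * ∏ j, J j (n j) = ∫ r, (ψ r - L) * W r ∂P := by
      rw [show (fun r => (ψ r - L) * W r) = fun r => ψ r * W r - L * W r from
        funext fun r => by ring, integral_sub hψW (hWint.const_mul L),
        integral_const_mul, hZ]
    rw [e1]
    calc |∫ r, (ψ r - L) * W r ∂P| ≤ ∫ r, |ψ r - L| * |W r| ∂P := by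
          simpa [Real.norm_eq_abs, abs_mul] using
            norm_integral_le_integral_norm (μ := P) (fun r => (ψ r - L) * W r)
      _ = ∫ r, |ψ r - L| * W r ∂P := by
          refine integral_congr_ae ?_
          filter_upwards [hW01] with r hr
          rw [abs_of_nonneg hr.1]
      _ ≤ ∫ r, ((ε/2) * W r + D * ∑ k, (B k).indicator W r) ∂P :=
          integral_mono_ae habsint hintRHS hptwise
      _ = (ε/2) * (∏ j, J j (n j)) +
          D * ∑ k, T k (n k) * ∏ j ∈ Finset.univ.erase k, J j (n j) := by
          rw [integral_add (hWint.const_mul _)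
            ((integrable_finset_sum _ fun k _ => hintInd k).const_mul _),
            integral_const_mul, integral_const_mul, hZ,
            integral_finset_sum _ fun k _ => hintInd k]
          congr 2
          exact Finset.sum_congr rfl fun k _ => hfact k
  -- conclude
  rw [Real.dist_eq]
  have hZp := hZpos n
  have e2 : (∫ r, ψ r * W r ∂P) / (∏ j, J j (n j)) - L =
      ((∫ r, ψ r * W r ∂P) - L * ∏ j, J j (n j)) / ∏ j, J j (n j) := by
    field_simp
  rw [e2, abs_div, abs_of_pos hZp, div_lt_iff₀ hZp]
  have hIk : ∀ k, T k (n k) * ∏ j ∈ Finset.univ.erase k, J j (n j) =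
      (T k (n k) / J k (n k)) * ∏ j, J j (n j) := by
    intro k
    rw [← Finset.mul_prod_erase Finset.univ (fun j => J j (n j)) (Finset.mem_univ k)]
    field_simp [(hJpos k (n k)).ne']
  have e3 : (ε/2) * (∏ j, J j (n j)) +
      D * ∑ k, T k (n k) * ∏ j ∈ Finset.univ.erase k, J j (n j) =
      (ε/2 + D * ∑ k, T k (n k) / J k (n k)) * ∏ j, J j (n j) := by
    simp_rw [hIk]
    rw [← Finset.sum_mul]
    ring
  refine lt_of_le_of_lt hmain ?_
  rw [e3]
  have : ε/2 + D * ∑ k, T k (n k) / J k (n k) < ε := by linarith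
  exact (mul_lt_mul_of_pos_right this hZp)

end MultiDim


/-- Ratio-limit lemma (several variables): if `μ₁,…,μ_N` are finite regular Borel measures on
`[0,1)` with `μ_j([r,1)) > 0` for `0 < r < 1`, and `φ` is bounded measurable on `[0,1)^N`
with limit `α` at `(1,…,1)`, then for any tuples of reals `δ, β`,
`(∫ φ(r) ∏ r_j^{m_j+δ_j} dμ) / (∫ ∏ r_j^{m_j+β_j} dμ) → α` as all `m_j → ∞`. -/
theorem stmt1 (N : ℕ) (μs : Fin N → Measure ℝ) [∀ j, IsFiniteMeasure (μs j)]
    (hreg : ∀ j, (μs j).Regular)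
    (hsupp : ∀ j, μs j (Set.Ico (0:ℝ) 1)ᶜ = 0)
    (hpos : ∀ j, ∀ r : ℝ, 0 < r → r < 1 → 0 < μs j (Set.Ico r 1))
    (δ β : Fin N → ℝ) (φ : (Fin N → ℝ) → ℝ) (hφm : Measurable φ)
    (hφb : ∃ C, ∀ r, |φ r| ≤ C) (α : ℝ)
    (hlim : Tendsto φ (nhdsWithin (fun _ => 1) (Set.univ.pi fun _ => Set.Ico (0:ℝ) 1))
      (nhds α)) :
    Tendsto (fun m : Fin N → ℕ =>
        (∫ r in Set.univ.pi (fun _ => Set.Ico (0:ℝ) 1),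
            φ r * ∏ j, r j ^ ((m j : ℝ) + δ j) ∂Measure.pi μs) /
          (∫ r in Set.univ.pi (fun _ => Set.Ico (0:ℝ) 1),
            ∏ j, r j ^ ((m j : ℝ) + β j) ∂Measure.pi μs))
      atTop (nhds α) := by
  classical
  obtain ⟨C, hC⟩ := hφb
  set P := Measure.pi μs with hPdef
  have hae : ∀ᵐ r ∂P, ∀ j, r j ∈ Set.Ico (0:ℝ) 1 := my_cube_ae hsupp
  have haemem : ∀ᵐ r ∂P, r ∈ Set.univ.pi fun _ : Fin N => Set.Ico (0:ℝ) 1 := by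
    filter_upwards [hae] with r hr
    exact Set.mem_univ_pi.mpr hr
  have hres : P.restrict (Set.univ.pi fun _ : Fin N => Set.Ico (0:ℝ) 1) = P :=
    Measure.restrict_eq_self_of_ae_mem haemem
  obtain ⟨K, hK⟩ := exists_nat_ge ((∑ j, (|δ j| + |β j|)) + 1)
  have hKj : ∀ j, |δ j| + 1 ≤ (K:ℝ) ∧ |β j| + 1 ≤ (K:ℝ) := by
    intro j
    have h1 : |δ j| + |β j| ≤ ∑ j', (|δ j'| + |β j'|) :=
      Finset.single_le_sum (f := fun j' => |δ j'| + |β j'|)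
        (fun j' _ => by positivity) (Finset.mem_univ j)
    have h2 : |δ j| ≤ ∑ j', (|δ j'| + |β j'|) :=
      le_trans (le_add_of_nonneg_right (abs_nonneg _)) h1
    have h3 : |β j| ≤ ∑ j', (|δ j'| + |β j'|) :=
      le_trans (le_add_of_nonneg_left (abs_nonneg _)) h1
    exact ⟨by linarith, by linarith⟩
  have hexpδ : ∀ j, 1 ≤ δ j + K := by
    intro j
    have h1 := (hKj j).1
    have h2 := neg_abs_le (δ j)
    linarith
  have hexpβ : ∀ j, 1 ≤ β j + K := by
    intro j
    have h1 := (hKj j).2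
    have h2 := neg_abs_le (β j)
    linarith
  set ψδ : (Fin N → ℝ) → ℝ := fun r => φ r * ∏ j, r j ^ (δ j + K) with hψδ
  set ψβ : (Fin N → ℝ) → ℝ := fun r => ∏ j, r j ^ (β j + K) with hψβ
  have hcont : ∀ c : ℝ, 0 ≤ c → Continuous fun x : ℝ => x ^ c := fun c hc =>
    continuous_iff_continuousAt.mpr fun x => Real.continuousAt_rpow_const x c (Or.inr hc)
  have hmδ : Measurable ψδ :=
    hφm.mul (Finset.measurable_prod _ fun j _ =>
      ((hcont _ (le_trans zero_le_one (hexpδ j))).measurable).comp (measurable_pi_apply j))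
  have hmβ : Measurable ψβ :=
    Finset.measurable_prod _ fun j _ =>
      ((hcont _ (le_trans zero_le_one (hexpβ j))).measurable).comp (measurable_pi_apply j)
  have hprod01 : ∀ (γ : Fin N → ℝ), (∀ j, 0 ≤ γ j + K) → ∀ (r : Fin N → ℝ),
      (∀ j, r j ∈ Set.Ico (0:ℝ) 1) →
      0 ≤ (∏ j, r j ^ (γ j + K)) ∧ (∏ j, r j ^ (γ j + K)) ≤ 1 := by
    intro γ hγ r hr
    constructor
    · exact Finset.prod_nonneg fun j _ => Real.rpow_nonneg (hr j).1 _
    · exact Finset.prod_le_one (fun j _ => Real.rpow_nonneg (hr j).1 _)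
        (fun j _ => Real.rpow_le_one (hr j).1 (hr j).2.le (hγ j))
  have hbδ : ∀ᵐ r ∂P, |ψδ r| ≤ |C| := by
    filter_upwards [hae] with r hr
    obtain ⟨h0, h1⟩ := hprod01 δ (fun j => le_trans (by norm_num) (hexpδ j)) r hr
    rw [hψδ, abs_mul, abs_of_nonneg h0]
    calc |φ r| * ∏ j, r j ^ (δ j + K) ≤ |C| * 1 :=
        mul_le_mul ((hC r).trans (le_abs_self C)) h1 h0 (abs_nonneg C)
      _ = |C| := mul_one _
  have hbβ : ∀ᵐ r ∂P, |ψβ r| ≤ 1 := by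
    filter_upwards [hae] with r hr
    obtain ⟨h0, h1⟩ := hprod01 β (fun j => le_trans (by norm_num) (hexpβ j)) r hr
    rw [hψβ, abs_of_nonneg h0]
    exact h1
  have hprodlim : ∀ γ : Fin N → ℝ, Tendsto (fun r : Fin N → ℝ => ∏ j, r j ^ (γ j))
      (nhdsWithin (fun _ => 1) (Set.univ.pi fun _ => Set.Ico (0:ℝ) 1)) (nhds 1) := by
    intro γ
    have h1 : ∀ j : Fin N, Tendsto (fun r : Fin N → ℝ => r j ^ (γ j))
        (nhdsWithin (fun _ => 1) (Set.univ.pi fun _ => Set.Ico (0:ℝ) 1)) (nhds 1) := by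
      intro j
      have hc : ContinuousAt (fun x : ℝ => x ^ (γ j)) 1 :=
        Real.continuousAt_rpow_const 1 (γ j) (Or.inl one_ne_zero)
      have h3 : Tendsto (fun r : Fin N → ℝ => r j ^ (γ j)) (nhds (fun _ => 1))
          (nhds ((1:ℝ) ^ (γ j))) :=
        hc.tendsto.comp ((continuous_apply j).tendsto _)
      have h4 := h3.mono_left (nhdsWithin_le_nhds
        (s := Set.univ.pi fun _ : Fin N => Set.Ico (0:ℝ) 1))
      simpa [Real.one_rpow] using h4
    have := tendsto_finset_prod (Finset.univ) (fun j (_ : j ∈ Finset.univ) => h1 j)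
    simpa using this
  have hlimδ : Tendsto ψδ
      (nhdsWithin (fun _ => 1) (Set.univ.pi fun _ => Set.Ico (0:ℝ) 1)) (nhds α) := by
    have := hlim.mul (hprodlim (fun j => δ j + K))
    simpa using this
  have hlimβ : Tendsto ψβ
      (nhdsWithin (fun _ => 1) (Set.univ.pi fun _ => Set.Ico (0:ℝ) 1)) (nhds 1) :=
    hprodlim (fun j => β j + K)
  have Hδ := my_core hsupp hpos ψδ hmδ (|C|) hbδ α hlimδ
  have Hβ := my_core hsupp hpos ψβ hmβ 1 hbβ 1 hlimβ
  have hshift : Tendsto (fun m : Fin N → ℕ => fun j => m j - K) atTop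
      (atTop : Filter (Fin N → ℕ)) := by
    refine tendsto_atTop_atTop.mpr fun b => ⟨fun j => b j + K, fun m hm => ?_⟩
    intro j
    have h2 : b j + K ≤ m j := hm j
    show b j ≤ m j - K
    omega
  have Hdiv := (Hδ.comp hshift).div (Hβ.comp hshift) one_ne_zero
  rw [div_one] at Hdiv
  refine Tendsto.congr' ?_ Hdiv
  have hKm : ∀ᶠ m : Fin N → ℕ in atTop, ∀ j, K ≤ m j := by
    refine eventually_atTop.mpr ⟨fun _ => K, fun m hm => fun j => hm j⟩
  filter_upwards [hKm] with m hm
  simp only [Pi.div_apply, Function.comp_apply]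
  have hfactor : ∀ (γ : Fin N → ℝ), (∀ j, 1 ≤ γ j + K) → ∀ (r : Fin N → ℝ),
      (∀ j, r j ∈ Set.Ico (0:ℝ) 1) → ∀ j,
      r j ^ ((m j : ℝ) + γ j) = r j ^ (γ j + K) * r j ^ ((m j - K : ℕ)) := by
    intro γ hγ r hr j
    rcases eq_or_lt_of_le (hr j).1 with h0 | h0
    · rw [← h0]
      have hK1 : (K:ℝ) ≤ m j := by exact_mod_cast Nat.cast_le.mpr (hm j)
      have he1 : (m j : ℝ) + γ j ≠ 0 := by
        have := hγ j
        nlinarith [Nat.cast_nonneg (α := ℝ) K]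
      have he2 : γ j + K ≠ 0 := by
        have := hγ j
        linarith
      rw [Real.zero_rpow he1, Real.zero_rpow he2, zero_mul]
    · rw [← Real.rpow_natCast (r j) (m j - K), ← Real.rpow_add h0]
      congr 1
      rw [Nat.cast_sub (hm j)]
      ring
  have hA : (∫ r in Set.univ.pi (fun _ : Fin N => Set.Ico (0:ℝ) 1),
      φ r * ∏ j, r j ^ ((m j : ℝ) + δ j) ∂Measure.pi μs) =
      ∫ r, ψδ r * ∏ j, r j ^ ((m j - K : ℕ)) ∂P := by
    rw [show (Measure.pi μs).restrict (Set.univ.pi fun _ : Fin N => Set.Ico (0:ℝ) 1)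
        = P from hres]
    refine integral_congr_ae ?_
    filter_upwards [hae] with r hr
    rw [hψδ, mul_assoc, ← Finset.prod_mul_distrib]
    congr 1
    exact Finset.prod_congr rfl fun j _ => hfactor δ hexpδ r hr j
  have hB : (∫ r in Set.univ.pi (fun _ : Fin N => Set.Ico (0:ℝ) 1),
      ∏ j, r j ^ ((m j : ℝ) + β j) ∂Measure.pi μs) =
      ∫ r, ψβ r * ∏ j, r j ^ ((m j - K : ℕ)) ∂P := by
    rw [show (Measure.pi μs).restrict (Set.univ.pi fun _ : Fin N => Set.Ico (0:ℝ) 1)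
        = P from hres]
    refine integral_congr_ae ?_
    filter_upwards [hae] with r hr
    rw [hψβ, ← Finset.prod_mul_distrib]
    exact Finset.prod_congr rfl fun j _ => hfactor β hexpβ r hr j
  have hZne : (∏ j, ∫ x, x ^ (m j - K) ∂μs j) ≠ 0 :=
    (Finset.prod_pos fun j _ => my_J_pos (hsupp j) (hpos j) _).ne'
  have hcancel : ∀ a b z : ℝ, z ≠ 0 → (a / z) / (b / z) = a / b := by
    intro a b z hz
    rcases eq_or_ne b 0 with hb | hb
    · simp [hb]
    · field_simp
  rw [hcancel _ _ _ hZne, hA, hB]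
end
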